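/- Let $(U_N)_{N\ge 1}$ be a sequence of symmetric $d\times d$ real matrices with $a_- I \le U_N \le a_+ I$ for constants $0< a_- \le a_+$, and let $A^\star$ be symmetric positive definite. Assume $\limsup_{N\to\infty} p^T U_N p \le p^T A^\star p$ and $\limsup_{N\to\infty} p^T U_N^{-1} p \le p^T (A^\star)^{-1} p$ for every $p\in\mathbb{R}^d$. Then $U_N \to A^\star$ as $N\to\infty$. -/

import Mathlib

open Matrix Filter

private lemma real_symm_dot {d : ℕ} {M : Matrix (Fin d) (Fin d) ℝ} (hM : M.IsHermitian)
    (v w : Fin d → ℝ) : v ⬝ᵥ M *ᵥ w = w ⬝ᵥ M *ᵥ v := by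
  have hMt : Mᵀ = M := by rw [← conjTranspose_eq_transpose_of_trivial]; exact hM
  rw [dotProduct_mulVec, ← mulVec_transpose, hMt, dotProduct_comm]

private lemma psd_cs {d : ℕ} {M : Matrix (Fin d) (Fin d) ℝ} (hM : M.PosSemidef)
    (p r : Fin d → ℝ) :
    (p ⬝ᵥ M *ᵥ r) ^ 2 ≤ (p ⬝ᵥ M *ᵥ p) * (r ⬝ᵥ M *ᵥ r) := by
  have key : ∀ t : ℝ,
      0 ≤ (r ⬝ᵥ M *ᵥ r) * (t * t) + (2 * (p ⬝ᵥ M *ᵥ r)) * t + (p ⬝ᵥ M *ᵥ p) := by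
    intro t
    have h := hM.dotProduct_mulVec_nonneg (p + t • r)
    rw [star_trivial] at h
    have hexp : (p + t • r) ⬝ᵥ M *ᵥ (p + t • r)
        = p ⬝ᵥ M *ᵥ p + t * (p ⬝ᵥ M *ᵥ r) + t * (r ⬝ᵥ M *ᵥ p) + (t * t) * (r ⬝ᵥ M *ᵥ r) := by
      simp only [mulVec_add, mulVec_smul, dotProduct_add, add_dotProduct, dotProduct_smul,
        smul_dotProduct, smul_eq_mul]
      ring
    rw [hexp, real_symm_dot hM.1 r p] at h
    linarith
  have h2 := discrim_le_zero key
  rw [discrim] at h2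
  nlinarith [h2]

private lemma dot_cs {d : ℕ} (v w : Fin d → ℝ) : (v ⬝ᵥ w) ^ 2 ≤ (v ⬝ᵥ v) * (w ⬝ᵥ w) := by
  have := Finset.sum_mul_sq_le_sq_mul_sq Finset.univ v w
  simpa [dotProduct, sq] using this

private lemma entry_polarization {d : ℕ} {M : Matrix (Fin d) (Fin d) ℝ} (hM : M.IsSymm)
    (i j : Fin d) :
    M i j = (((Pi.single i 1 + Pi.single j 1 : Fin d → ℝ)) ⬝ᵥ
        M *ᵥ (Pi.single i 1 + Pi.single j 1)
      - (Pi.single i 1 : Fin d → ℝ) ⬝ᵥ M *ᵥ (Pi.single i 1)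
      - (Pi.single j 1 : Fin d → ℝ) ⬝ᵥ M *ᵥ (Pi.single j 1)) / 2 := by
  have hji : M j i = M i j := hM.apply i j
  have e : ∀ a b : Fin d, (Pi.single a 1 : Fin d → ℝ) ⬝ᵥ M *ᵥ Pi.single b 1 = M a b := by
    intro a b
    rw [mulVec_single, single_dotProduct]
    simp
  simp only [mulVec_add, dotProduct_add, add_dotProduct, e]
  rw [hji]
  ring

/-- Squeezing/compactness argument: if `U_N` are symmetric matrices with
`a₋ I ≤ U_N ≤ a₊ I` in the Loewner order (`0 < a₋ ≤ a₊`), `A⋆` is symmetric positive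
definite, and for every `p` both `limsup pᵀ U_N p ≤ pᵀ A⋆ p` and
`limsup pᵀ U_N⁻¹ p ≤ pᵀ (A⋆)⁻¹ p`, then `U_N → A⋆`. -/
theorem squeeze_matrices_tendsto {d : ℕ}
    (U : ℕ → Matrix (Fin d) (Fin d) ℝ)
    (Astar : Matrix (Fin d) (Fin d) ℝ)
    (aminus aplus : ℝ) (haminus : 0 < aminus) (ha : aminus ≤ aplus)
    (hUsymm : ∀ N, (U N).IsSymm)
    (hlower : ∀ N, (U N - aminus • (1 : Matrix (Fin d) (Fin d) ℝ)).PosSemidef)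
    (hupper : ∀ N, (aplus • (1 : Matrix (Fin d) (Fin d) ℝ) - U N).PosSemidef)
    (hA : Astar.PosDef) (hAsymm : Astar.IsSymm)
    (h1 : ∀ p : Fin d → ℝ,
      limsup (fun N => p ⬝ᵥ (U N).mulVec p) atTop ≤ p ⬝ᵥ Astar.mulVec p)
    (h2 : ∀ p : Fin d → ℝ,
      limsup (fun N => p ⬝ᵥ (U N)⁻¹.mulVec p) atTop ≤ p ⬝ᵥ Astar⁻¹.mulVec p) :
    Tendsto U atTop (nhds Astar) := by
  -- basic auxiliary facts
  have hselfpos : ∀ x : Fin d → ℝ, x ≠ 0 → 0 < x ⬝ᵥ x := by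
    intro x hx
    have := Matrix.dotProduct_self_star_pos_iff (v := x)
    rw [star_trivial] at this
    exact this.2 hx
  have hb_lo : ∀ N (x : Fin d → ℝ), aminus * (x ⬝ᵥ x) ≤ x ⬝ᵥ U N *ᵥ x := by
    intro N x
    have h := (hlower N).dotProduct_mulVec_nonneg x
    rw [star_trivial] at h
    have hexp : x ⬝ᵥ (U N - aminus • (1 : Matrix (Fin d) (Fin d) ℝ)) *ᵥ x
        = x ⬝ᵥ U N *ᵥ x - aminus * (x ⬝ᵥ x) := by
      rw [sub_mulVec, dotProduct_sub, smul_mulVec, one_mulVec, dotProduct_smul,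
        smul_eq_mul]
    rw [hexp] at h; linarith
  have hb_up : ∀ N (x : Fin d → ℝ), x ⬝ᵥ U N *ᵥ x ≤ aplus * (x ⬝ᵥ x) := by
    intro N x
    have h := (hupper N).dotProduct_mulVec_nonneg x
    rw [star_trivial] at h
    have hexp : x ⬝ᵥ (aplus • (1 : Matrix (Fin d) (Fin d) ℝ) - U N) *ᵥ x
        = aplus * (x ⬝ᵥ x) - x ⬝ᵥ U N *ᵥ x := by
      rw [sub_mulVec, dotProduct_sub, smul_mulVec, one_mulVec, dotProduct_smul,
        smul_eq_mul]
    rw [hexp] at h; linarith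
  have hUpd : ∀ N, (U N).PosDef := by
    intro N
    refine PosDef.of_dotProduct_mulVec_pos ?_ fun x hx => ?_
    · rw [Matrix.IsHermitian, conjTranspose_eq_transpose_of_trivial]; exact hUsymm N
    · rw [star_trivial]
      have := hb_lo N x
      have := hselfpos x hx
      nlinarith
  have hUdet : ∀ N, IsUnit (U N).det := fun N => (hUpd N).det_pos.ne'.isUnit
  have hAdet : IsUnit Astar.det := hA.det_pos.ne'.isUnit
  have hUinv_pd : ∀ N, ((U N)⁻¹).PosDef := fun N => (hUpd N).inv
  -- upper bound for the inverse quadratic form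
  have hinv_up : ∀ N (x : Fin d → ℝ), x ⬝ᵥ (U N)⁻¹ *ᵥ x ≤ (x ⬝ᵥ x) / aminus := by
    intro N x
    set r := (U N)⁻¹ *ᵥ x with hr
    have hUr : U N *ᵥ r = x := by
      rw [hr, mulVec_mulVec, mul_nonsing_inv _ (hUdet N), one_mulVec]
    set s := x ⬝ᵥ (U N)⁻¹ *ᵥ x with hs
    have hsr : s = r ⬝ᵥ U N *ᵥ r := by rw [hUr, hs, ← hr, dotProduct_comm]
    have h1' : aminus * (r ⬝ᵥ r) ≤ s := hsr ▸ hb_lo N r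
    have h2' : s ^ 2 ≤ (r ⬝ᵥ r) * (x ⬝ᵥ x) := by
      have := dot_cs r x
      have hrx : r ⬝ᵥ x = s := by rw [hs, ← hr, dotProduct_comm]
      rwa [hrx] at this
    have hsnn : 0 ≤ s := by
      have := (hUinv_pd N).posSemidef.dotProduct_mulVec_nonneg x
      rwa [star_trivial] at this
    have hxx : 0 ≤ x ⬝ᵥ x := by
      rcases eq_or_ne x 0 with h | h
      · simp [h]
      · exact (hselfpos x h).le
    rw [le_div_iff₀ haminus]
    rcases hsnn.eq_or_lt with h | h
    · nlinarith
    · nlinarith [mul_le_mul_of_nonneg_right h1' hxx, h2', h]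
  -- boundedness of the sequences (for limsup manipulation)
  have hbddx : ∀ p : Fin d → ℝ, IsBoundedUnder (· ≤ ·) atTop (fun N => p ⬝ᵥ U N *ᵥ p) :=
    fun p => isBoundedUnder_of ⟨aplus * (p ⬝ᵥ p), fun N => hb_up N p⟩
  have hbddy : ∀ p : Fin d → ℝ, IsBoundedUnder (· ≤ ·) atTop (fun N => p ⬝ᵥ (U N)⁻¹ *ᵥ p) :=
    fun p => isBoundedUnder_of ⟨(p ⬝ᵥ p) / aminus, fun N => hinv_up N p⟩
  -- convergence of the quadratic forms
  have hquad : ∀ p : Fin d → ℝ,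
      Tendsto (fun N => p ⬝ᵥ U N *ᵥ p) atTop (nhds (p ⬝ᵥ Astar *ᵥ p)) := by
    intro p
    rcases eq_or_ne p 0 with hp | hp
    · subst hp; simp
    set c := p ⬝ᵥ Astar *ᵥ p with hc
    have hcpos : 0 < c := by
      have := hA.dotProduct_mulVec_pos hp
      rwa [star_trivial] at this
    set q := Astar *ᵥ p with hq
    have hAinvq : Astar⁻¹ *ᵥ q = p := by
      rw [hq, mulVec_mulVec, nonsing_inv_mul _ hAdet, one_mulVec]
    have hqAinv : q ⬝ᵥ Astar⁻¹ *ᵥ q = c := by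
      rw [hAinvq, dotProduct_comm, hq]
    have hqne : q ≠ 0 := by
      intro h
      apply hp
      rw [← hAinvq, h, mulVec_zero]
    -- key inequality : c² ≤ x_N * y_N
    have hkey : ∀ N, c ^ 2 ≤ (p ⬝ᵥ U N *ᵥ p) * (q ⬝ᵥ (U N)⁻¹ *ᵥ q) := by
      intro N
      set r := (U N)⁻¹ *ᵥ q with hr
      have hUr : U N *ᵥ r = q := by
        rw [hr, mulVec_mulVec, mul_nonsing_inv _ (hUdet N), one_mulVec]
      have h1' : p ⬝ᵥ U N *ᵥ r = c := by rw [hUr, hc, hq]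
      have h2' : r ⬝ᵥ U N *ᵥ r = q ⬝ᵥ (U N)⁻¹ *ᵥ q := by
        rw [hUr, ← hr, dotProduct_comm]
      have := psd_cs (hUpd N).posSemidef p r
      rwa [h1', h2'] at this
    have hypos : ∀ N, 0 < q ⬝ᵥ (U N)⁻¹ *ᵥ q := by
      intro N
      have := (hUinv_pd N).dotProduct_mulVec_pos hqne
      rwa [star_trivial] at this
    refine tendsto_order.2 ⟨fun a halt => ?_, fun a hagt => ?_⟩
    · -- lower bound : eventually a < x_N
      rcases le_or_gt a 0 with ha0 | ha0
      · refine Eventually.of_forall fun N => lt_of_le_of_lt ha0 ?_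
        have := hb_lo N p
        have := hselfpos p hp
        nlinarith
      · have hlimy : limsup (fun N => q ⬝ᵥ (U N)⁻¹ *ᵥ q) atTop ≤ c :=
          le_of_le_of_eq (h2 q) hqAinv
        have hca : c < c ^ 2 / a := by
          rw [lt_div_iff₀ ha0]
          nlinarith
        have hev := eventually_lt_of_limsup_lt (lt_of_le_of_lt hlimy hca) (hbddy q)
        filter_upwards [hev] with N hN
        have hk := hkey N
        have hy := hypos N
        have hya : (q ⬝ᵥ (U N)⁻¹ *ᵥ q) * a < c ^ 2 := (lt_div_iff₀ ha0).1 hN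
        nlinarith
    · -- upper bound : eventually x_N < a
      exact eventually_lt_of_limsup_lt (lt_of_le_of_lt (h1 p) hagt) (hbddx p)
  -- polarization : entrywise convergence
  refine tendsto_pi_nhds.2 fun i => ?_
  rw [tendsto_pi_nhds]
  intro j
  have hcomb : Tendsto (fun N =>
      (((Pi.single i 1 + Pi.single j 1 : Fin d → ℝ)) ⬝ᵥ
          (U N) *ᵥ (Pi.single i 1 + Pi.single j 1)
        - (Pi.single i 1 : Fin d → ℝ) ⬝ᵥ (U N) *ᵥ (Pi.single i 1)
        - (Pi.single j 1 : Fin d → ℝ) ⬝ᵥ (U N) *ᵥ (Pi.single j 1)) / 2) atTop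
      (nhds ((((Pi.single i 1 + Pi.single j 1 : Fin d → ℝ)) ⬝ᵥ
          Astar *ᵥ (Pi.single i 1 + Pi.single j 1)
        - (Pi.single i 1 : Fin d → ℝ) ⬝ᵥ Astar *ᵥ (Pi.single i 1)
        - (Pi.single j 1 : Fin d → ℝ) ⬝ᵥ Astar *ᵥ (Pi.single j 1)) / 2)) :=
    (((hquad _).sub (hquad _)).sub (hquad _)).div_const 2
  rw [entry_polarization hAsymm i j]
  refine hcomb.congr fun N => ?_
  exact (entry_polarization (hUsymm N) i j).symm
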